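/- Let G be a snark and M = {M₁, M₂, M₃} a 3-array of perfect matchings of G with exactly 3 uncovered edges. Then the core of M is a 6-cycle alternating uncovered and doubly covered edges; in particular M₁ ∩ M₂ ∩ M₃ = ∅. -/

import Mathlib

open Finset

def SimpleGraph.IsCubic {V : Type*} [Fintype V] (G : SimpleGraph V)
    [DecidableRel G.Adj] : Prop :=
  ∀ v : V, G.degree v = 3

def SimpleGraph.IsProper3EdgeColouring {V : Type*} (G : SimpleGraph V)
    (σ : Sym2 V → ZMod 2 × ZMod 2) : Prop :=
  (∀ e ∈ G.edgeSet, σ e ≠ 0) ∧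
  ∀ e ∈ G.edgeSet, ∀ f ∈ G.edgeSet, e ≠ f → ∀ v : V, v ∈ e → v ∈ f → σ e ≠ σ f

def SimpleGraph.TwoConnected {V : Type*} (G : SimpleGraph V) : Prop :=
  G.Connected ∧ ∀ v : V, (G.induce {u | u ≠ v}).Connected

def SimpleGraph.IsSnark {V : Type*} [Fintype V] (G : SimpleGraph V)
    [DecidableRel G.Adj] : Prop :=
  G.IsCubic ∧ G.TwoConnected ∧
    ¬ ∃ σ : Sym2 V → ZMod 2 × ZMod 2, G.IsProper3EdgeColouring σ

def SimpleGraph.IsPM {V : Type*} (G : SimpleGraph V) (M : Finset (Sym2 V)) : Prop :=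
  (↑M ⊆ G.edgeSet) ∧ ∀ v : V, ∃! e, e ∈ M ∧ v ∈ e

def cov {V : Type*} [DecidableEq V] (M₁ M₂ M₃ : Finset (Sym2 V)) (e : Sym2 V) : ℕ :=
  (if e ∈ M₁ then 1 else 0) + (if e ∈ M₂ then 1 else 0) + (if e ∈ M₃ then 1 else 0)

/-- The core of a 3-array: the subgraph formed by the edges not simply covered. -/
def coreGraph {V : Type*} [DecidableEq V] (G : SimpleGraph V)
    (M₁ M₂ M₃ : Finset (Sym2 V)) : SimpleGraph V where
  Adj u v := G.Adj u v ∧ cov M₁ M₂ M₃ s(u, v) ≠ 1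
  symm := by
    constructor
    intro u v h
    exact ⟨h.1.symm, by rw [Sym2.eq_swap]; exact h.2⟩
  loopless := by
    constructor
    intro v h
    exact G.loopless.irrefl v h.1

lemma pair_count {V : Type*} [DecidableEq V] (A : Finset V) (B : Finset (Sym2 V)) :
    ∑ x ∈ A, (B.filter (x ∈ ·)).card = ∑ e ∈ B, (A.filter (· ∈ e)).card := by
  simp only [Finset.card_filter]
  exact Finset.sum_comm

lemma partition34 {α : Type*} (S : Finset α) (f : α → ℕ) [DecidableEq α]
    (hf : ∀ e ∈ S, f e ≤ 3) :
    (S.filter (fun e => f e = 0)).card + (S.filter (fun e => f e = 1)).card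
      + (S.filter (fun e => f e = 2)).card + (S.filter (fun e => f e = 3)).card = S.card ∧
    (S.filter (fun e => f e = 1)).card + 2 * (S.filter (fun e => f e = 2)).card
      + 3 * (S.filter (fun e => f e = 3)).card = ∑ e ∈ S, f e := by
  classical
  have key : ∀ e ∈ S, ((if f e = 0 then 1 else 0) + (if f e = 1 then 1 else 0)
      + (if f e = 2 then 1 else 0) + (if f e = 3 then 1 else 0) = 1) ∧
      ((if f e = 1 then 1 else 0) + 2 * (if f e = 2 then 1 else 0)
      + 3 * (if f e = 3 then 1 else 0) = f e) := by
    intro e he; have := hf e he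
    constructor <;> split_ifs <;> omega
  constructor
  · simp only [Finset.card_filter, ← Finset.sum_add_distrib]
    rw [Finset.sum_congr rfl (fun e he => (key e he).1), ← Finset.card_eq_sum_ones]
  · simp only [Finset.card_filter, Finset.mul_sum, ← Finset.sum_add_distrib]
    exact Finset.sum_congr rfl fun e he => (key e he).2

lemma filter_mem_sym2 {V : Type*} [DecidableEq V] (A : Finset V) (a b : V) (hab : a ≠ b)
    (ha : a ∈ A) (hb : b ∈ A) : (A.filter (· ∈ s(a,b))).card = 2 := by
  have : A.filter (· ∈ s(a,b)) = {a, b} := by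
    ext x
    simp only [Finset.mem_filter, Sym2.mem_iff, Finset.mem_insert, Finset.mem_singleton]
    constructor
    · rintro ⟨-, h⟩; exact h
    · rintro (rfl | rfl)
      exacts [⟨ha, Or.inl rfl⟩, ⟨hb, Or.inr rfl⟩]
  rw [this, Finset.card_pair hab]

lemma filter_mem_sym2_zero {V : Type*} [DecidableEq V] (A : Finset V) (a b : V)
    (ha : a ∉ A) (hb : b ∉ A) : (A.filter (· ∈ s(a,b))).card = 0 := by
  rw [Finset.card_eq_zero, Finset.filter_eq_empty_iff]
  intro x hx
  simp only [Sym2.mem_iff]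
  rintro (rfl | rfl) <;> [exact ha hx; exact hb hx]

/-- If a 3-array of a snark has exactly 3 uncovered edges, then its core is a 6-cycle
alternating uncovered and doubly covered edges; in particular the three matchings
have empty intersection. -/
theorem three_uncovered_core_is_hexagon {V : Type*} [Fintype V] [DecidableEq V]
    (G : SimpleGraph V) [DecidableRel G.Adj] (hG : G.IsSnark)
    (M₁ M₂ M₃ : Finset (Sym2 V)) (h₁ : G.IsPM M₁) (h₂ : G.IsPM M₂) (h₃ : G.IsPM M₃)
    (huncov : (G.edgeFinset.filter (fun e => cov M₁ M₂ M₃ e = 0)).card = 3) :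
    M₁ ∩ M₂ ∩ M₃ = ∅ ∧
    (G.edgeFinset.filter (fun e => cov M₁ M₂ M₃ e ≠ 1)).card = 6 ∧
    (∀ v : V, (∃ u, (coreGraph G M₁ M₂ M₃).Adj v u) →
      (G.edgeFinset.filter (fun f => v ∈ f ∧ cov M₁ M₂ M₃ f = 0)).card = 1 ∧
      (G.edgeFinset.filter (fun f => v ∈ f ∧ cov M₁ M₂ M₃ f = 2)).card = 1) ∧
    (∀ u v : V, (∃ w, (coreGraph G M₁ M₂ M₃).Adj u w) →
      (∃ w, (coreGraph G M₁ M₂ M₃).Adj v w) →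
      (coreGraph G M₁ M₂ M₃).Reachable u v) := by
  classical
  obtain ⟨hcubic, -, -⟩ := hG
  set f : Sym2 V → ℕ := cov M₁ M₂ M₃ with hfdef
  set core : SimpleGraph V := coreGraph G M₁ M₂ M₃ with hcore
  have hcoreAdj : ∀ a b : V, core.Adj a b ↔ G.Adj a b ∧ f s(a,b) ≠ 1 := fun a b => Iff.rfl
  have hf3 : ∀ e, f e ≤ 3 := by
    intro e; simp only [hfdef, cov]; split_ifs <;> omega
  have hPM1 : ∀ (M : Finset (Sym2 V)), G.IsPM M → ∀ v : V,
      (M.filter (v ∈ ·)).card = 1 := by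
    intro M hM v
    obtain ⟨e, ⟨heM, hve⟩, huniq⟩ := hM.2 v
    rw [Finset.card_eq_one]
    refine ⟨e, ?_⟩
    ext g
    simp only [Finset.mem_filter, Finset.mem_singleton]
    constructor
    · rintro ⟨hgM, hg⟩; exact huniq g ⟨hgM, hg⟩
    · rintro rfl; exact ⟨heM, hve⟩
  have hIncM : ∀ (M : Finset (Sym2 V)), G.IsPM M → ∀ v : V,
      (G.incidenceFinset v).filter (· ∈ M) = M.filter (v ∈ ·) := by
    intro M hM v
    ext g
    simp only [Finset.mem_filter, SimpleGraph.mem_incidenceFinset,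
      SimpleGraph.incidenceSet, Set.mem_sep_iff]
    constructor
    · rintro ⟨⟨-, hv⟩, hM'⟩; exact ⟨hM', hv⟩
    · rintro ⟨hM', hv⟩; exact ⟨⟨hM.1 hM', hv⟩, hM'⟩
  have hEv : ∀ v : V, (G.incidenceFinset v).card = 3 := by
    intro v; rw [G.card_incidenceFinset_eq_degree]; exact hcubic v
  -- sum of f over edges at a vertex is 3
  have hsumv : ∀ v : V, ∑ e ∈ G.incidenceFinset v, f e = 3 := by
    intro v
    simp only [hfdef, cov]
    rw [Finset.sum_add_distrib, Finset.sum_add_distrib, ← Finset.card_filter,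
      ← Finset.card_filter, ← Finset.card_filter]
    rw [show (G.incidenceFinset v).filter (fun e => e ∈ M₁) = _ from hIncM M₁ h₁ v,
      show (G.incidenceFinset v).filter (fun e => e ∈ M₂) = _ from hIncM M₂ h₂ v,
      show (G.incidenceFinset v).filter (fun e => e ∈ M₃) = _ from hIncM M₃ h₃ v,
      hPM1 M₁ h₁ v, hPM1 M₂ h₂ v, hPM1 M₃ h₃ v]
  -- universal filter over an edge has two elements
  have huniv2 : ∀ e ∈ G.edgeSet, ((univ : Finset V).filter (· ∈ e)).card = 2 := by
    intro e he
    revert he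
    induction e using Sym2.ind with
    | _ a b =>
      intro he
      exact filter_mem_sym2 _ a b (G.ne_of_adj he) (mem_univ a) (mem_univ b)
  -- matchings have card n/2
  have hMcard : ∀ (M : Finset (Sym2 V)), G.IsPM M → 2 * M.card = Fintype.card V := by
    intro M hM
    have h := pair_count (univ : Finset V) M
    rw [Finset.sum_congr rfl (fun x _ => hPM1 M hM x), ← Finset.card_eq_sum_ones,
      Finset.card_univ,
      Finset.sum_congr rfl (fun e he => huniv2 e (hM.1 he)), Finset.sum_const,
      smul_eq_mul] at h
    omega
  -- global sum of f equals the number of edges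
  have hsumE : ∑ e ∈ G.edgeFinset, f e = G.edgeFinset.card := by
    have hdeg : ∑ v : V, G.degree v = 2 * G.edgeFinset.card :=
      G.sum_degrees_eq_twice_card_edges
    rw [Finset.sum_congr rfl (fun v _ => hcubic v), Finset.sum_const, smul_eq_mul,
      Finset.card_univ] at hdeg
    have hMsub : ∀ (M : Finset (Sym2 V)), G.IsPM M →
        G.edgeFinset.filter (· ∈ M) = M := by
      intro M hM
      ext g
      simp only [Finset.mem_filter, SimpleGraph.mem_edgeFinset]
      exact ⟨fun h => h.2, fun h => ⟨hM.1 h, h⟩⟩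
    have : ∑ e ∈ G.edgeFinset, f e = M₁.card + M₂.card + M₃.card := by
      simp only [hfdef, cov]
      rw [Finset.sum_add_distrib, Finset.sum_add_distrib, ← Finset.card_filter,
        ← Finset.card_filter, ← Finset.card_filter, hMsub M₁ h₁, hMsub M₂ h₂, hMsub M₃ h₃]
    have c1 := hMcard M₁ h₁
    have c2 := hMcard M₂ h₂
    have c3 := hMcard M₃ h₃
    omega
  obtain ⟨hparE1, hparE2⟩ := partition34 G.edgeFinset f (fun e _ => hf3 e)
  -- no triply covered edge
  have hT : (G.edgeFinset.filter (fun e => f e = 3)).card = 0 := by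
    by_contra hne
    obtain ⟨e, he⟩ := Finset.card_pos.mp (Nat.pos_of_ne_zero hne)
    rw [Finset.mem_filter, SimpleGraph.mem_edgeFinset] at he
    revert he
    induction e using Sym2.ind with
    | _ a b =>
      rintro ⟨hadj, hcov3⟩
      rw [SimpleGraph.mem_edgeSet] at hadj
      have hab : a ≠ b := G.ne_of_adj hadj
      -- all other edges at a and b are uncovered
      have haux : ∀ x y : V, G.Adj x y → f s(x,y) = 3 →
          ∀ g ∈ (G.incidenceFinset x).erase s(x,y), f g = 0 := by
        intro x y hxy h3 g hg
        have hmem : s(x,y) ∈ G.incidenceFinset x := by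
          rw [SimpleGraph.mem_incidenceFinset]
          exact ⟨hxy, Sym2.mem_mk_left x y⟩
        have hsum := hsumv x
        rw [← Finset.add_sum_erase _ f hmem, h3] at hsum
        have : ∑ g ∈ (G.incidenceFinset x).erase s(x,y), f g = 0 := by omega
        exact Finset.sum_eq_zero_iff.mp this g hg
      have hsub : ((G.incidenceFinset a).erase s(a,b)) ∪ ((G.incidenceFinset b).erase s(a,b))
          ⊆ G.edgeFinset.filter (fun e => f e = 0) := by
        intro g hg
        rw [Finset.mem_union] at hg
        rw [Finset.mem_filter, SimpleGraph.mem_edgeFinset]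
        rcases hg with hg | hg
        · have h0 := haux a b hadj hcov3 g hg
          have := Finset.mem_of_mem_erase hg
          rw [SimpleGraph.mem_incidenceFinset] at this
          exact ⟨this.1, h0⟩
        · have h0 := haux b a hadj.symm (by rwa [Sym2.eq_swap]) g (by rwa [Sym2.eq_swap])
          have := Finset.mem_of_mem_erase hg
          rw [SimpleGraph.mem_incidenceFinset] at this
          exact ⟨this.1, h0⟩
      have hdisj : Disjoint ((G.incidenceFinset a).erase s(a,b))
          ((G.incidenceFinset b).erase s(a,b)) := by
        rw [Finset.disjoint_left]
        intro g hga hgb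
        have h1 := Finset.mem_of_mem_erase hga
        have h2 := Finset.mem_of_mem_erase hgb
        rw [SimpleGraph.mem_incidenceFinset] at h1 h2
        have : g = s(a,b) := (Sym2.mem_and_mem_iff hab).mp ⟨h1.2, h2.2⟩
        rw [this] at hga
        exact Finset.notMem_erase _ _ hga
      have hmema : s(a,b) ∈ G.incidenceFinset a := by
        rw [SimpleGraph.mem_incidenceFinset]; exact ⟨hadj, Sym2.mem_mk_left a b⟩
      have hmemb : s(a,b) ∈ G.incidenceFinset b := by
        rw [SimpleGraph.mem_incidenceFinset]; exact ⟨hadj, Sym2.mem_mk_right a b⟩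
      have hca : ((G.incidenceFinset a).erase s(a,b)).card = 2 := by
        rw [Finset.card_erase_of_mem hmema, hEv]
      have hcb : ((G.incidenceFinset b).erase s(a,b)).card = 2 := by
        rw [Finset.card_erase_of_mem hmemb, hEv]
      have := Finset.card_le_card hsub
      rw [Finset.card_union_of_disjoint hdisj, hca, hcb, huncov] at this
      omega
  have hD : (G.edgeFinset.filter (fun e => f e = 2)).card = 3 := by omega
  -- Part 1
  have part1 : M₁ ∩ M₂ ∩ M₃ = ∅ := by
    rw [Finset.eq_empty_iff_forall_notMem]
    intro e he
    simp only [Finset.mem_inter] at he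
    have hE : e ∈ G.edgeFinset := by rw [SimpleGraph.mem_edgeFinset]; exact h₁.1 he.1.1
    have h3 : f e = 3 := by simp [hfdef, cov, he.1.1, he.1.2, he.2]
    have hmem : e ∈ G.edgeFinset.filter (fun e => f e = 3) := Finset.mem_filter.mpr ⟨hE, h3⟩
    rw [Finset.card_eq_zero] at hT
    rw [hT] at hmem
    exact absurd hmem (Finset.notMem_empty e)
  -- Part 2
  have part2 : (G.edgeFinset.filter (fun e => f e ≠ 1)).card = 6 := by
    have hunion : G.edgeFinset.filter (fun e => f e ≠ 1)
        = ((G.edgeFinset.filter (fun e => f e = 0)) ∪ (G.edgeFinset.filter (fun e => f e = 2)))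
          ∪ (G.edgeFinset.filter (fun e => f e = 3)) := by
      ext e
      simp only [Finset.mem_filter, Finset.mem_union]
      have := hf3 e
      constructor
      · rintro ⟨he, h1⟩
        have : f e = 0 ∨ f e = 2 ∨ f e = 3 := by omega
        tauto
      · rintro ((⟨he, h0⟩ | ⟨he, h0⟩) | ⟨he, h0⟩) <;> exact ⟨he, by omega⟩
    have d02 : Disjoint (G.edgeFinset.filter (fun e => f e = 0))
        (G.edgeFinset.filter (fun e => f e = 2)) := by
      rw [Finset.disjoint_left]; intro e he1 he2
      simp only [Finset.mem_filter] at he1 he2; omega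
    have d023 : Disjoint ((G.edgeFinset.filter (fun e => f e = 0))
        ∪ (G.edgeFinset.filter (fun e => f e = 2)))
        (G.edgeFinset.filter (fun e => f e = 3)) := by
      rw [Finset.disjoint_left]; intro e he1 he2
      simp only [Finset.mem_union, Finset.mem_filter] at he1 he2
      omega
    rw [hunion, Finset.card_union_of_disjoint d023, Finset.card_union_of_disjoint d02,
      huncov, hD, hT]
  -- Part 3 (incidence form)
  have hconv : ∀ (v : V) (k : ℕ), G.edgeFinset.filter (fun g => v ∈ g ∧ f g = k)
      = (G.incidenceFinset v).filter (fun g => f g = k) := by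
    intro v k
    ext g
    simp only [Finset.mem_filter, SimpleGraph.mem_incidenceFinset, SimpleGraph.incidenceSet,
      Set.mem_sep_iff, SimpleGraph.mem_edgeFinset]
    tauto
  have part3 : ∀ v : V, (∃ u, core.Adj v u) →
      ((G.incidenceFinset v).filter (fun g => f g = 0)).card = 1 ∧
      ((G.incidenceFinset v).filter (fun g => f g = 2)).card = 1 := by
    rintro v ⟨u, hu⟩
    obtain ⟨hp1, hp2⟩ := partition34 (G.incidenceFinset v) f (fun e _ => hf3 e)
    rw [hEv] at hp1
    rw [hsumv] at hp2
    have hm3 : ((G.incidenceFinset v).filter (fun e => f e = 3)).card = 0 := by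
      have hsub : (G.incidenceFinset v).filter (fun e => f e = 3)
          ⊆ G.edgeFinset.filter (fun e => f e = 3) := by
        intro g hg
        rw [Finset.mem_filter] at hg ⊢
        rw [SimpleGraph.mem_incidenceFinset] at hg
        exact ⟨SimpleGraph.mem_edgeFinset.mpr hg.1.1, hg.2⟩
      have := Finset.card_le_card hsub
      omega
    have hu' : G.Adj v u ∧ f s(v,u) ≠ 1 := hu
    have hmem : s(v,u) ∈ G.incidenceFinset v := by
      rw [SimpleGraph.mem_incidenceFinset]
      exact ⟨hu'.1, Sym2.mem_mk_left v u⟩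
    have hne : 1 ≤ ((G.incidenceFinset v).filter (fun e => f e = 0)).card
        + ((G.incidenceFinset v).filter (fun e => f e = 2)).card := by
      have hval : f s(v,u) = 0 ∨ f s(v,u) = 2 ∨ f s(v,u) = 3 := by
        have := hf3 s(v,u); have := hu'.2; omega
      rcases hval with h | h | h
      · have hmm : s(v,u) ∈ (G.incidenceFinset v).filter (fun e => f e = 0) :=
          Finset.mem_filter.mpr ⟨hmem, h⟩
        have := Finset.card_pos.mpr ⟨s(v,u), hmm⟩
        omega
      · have hmm : s(v,u) ∈ (G.incidenceFinset v).filter (fun e => f e = 2) :=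
          Finset.mem_filter.mpr ⟨hmem, h⟩
        have := Finset.card_pos.mpr ⟨s(v,u), hmm⟩
        omega
      · have hmm : s(v,u) ∈ (G.incidenceFinset v).filter (fun e => f e = 3) :=
          Finset.mem_filter.mpr ⟨hmem, h⟩
        have := Finset.card_pos.mpr ⟨s(v,u), hmm⟩
        omega
    exact ⟨by omega, by omega⟩
  -- the counting lemma for closed sets of core vertices
  set U : Finset (Sym2 V) := G.edgeFinset.filter (fun e => f e = 0) with hUdef
  have hUcard : U.card = 3 := huncov
  have count_lemma : ∀ A : Finset V, (∀ x ∈ A, ∃ w, core.Adj x w) →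
      (∀ x ∈ A, ∀ y : V, core.Adj x y → y ∈ A) →
      A.card = 2 * (U.filter (fun e => ∃ x ∈ A, x ∈ e)).card := by
    intro A hA hcl
    have lhs : ∀ x ∈ A, (U.filter (x ∈ ·)).card = 1 := by
      intro x hx
      have heq : U.filter (x ∈ ·) = (G.incidenceFinset x).filter (fun g => f g = 0) := by
        ext g
        simp only [hUdef, Finset.mem_filter, SimpleGraph.mem_incidenceFinset,
          SimpleGraph.incidenceSet, Set.mem_sep_iff, SimpleGraph.mem_edgeFinset]
        tauto
      rw [heq]
      exact (part3 x (hA x hx)).1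
    have hpc := pair_count A U
    rw [Finset.sum_congr rfl lhs, ← Finset.card_eq_sum_ones] at hpc
    rw [hpc, Finset.card_filter, Finset.mul_sum]
    refine Finset.sum_congr rfl fun e he => ?_
    have heE : e ∈ G.edgeSet ∧ f e = 0 := by
      rw [hUdef, Finset.mem_filter, SimpleGraph.mem_edgeFinset] at he; exact he
    clear he
    revert heE
    induction e using Sym2.ind with
    | _ a b =>
      rintro ⟨hadj, h0⟩
      rw [SimpleGraph.mem_edgeSet] at hadj
      have hab := G.ne_of_adj hadj
      have hcadj : core.Adj a b := ⟨hadj, show f s(a,b) ≠ 1 by omega⟩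
      by_cases ha : a ∈ A
      · have hb : b ∈ A := hcl a ha b hcadj
        rw [filter_mem_sym2 A a b hab ha hb, if_pos ⟨a, ha, Sym2.mem_mk_left a b⟩]
        omega
      · have hb : b ∉ A := fun hb => ha (hcl b hb a hcadj.symm)
        rw [filter_mem_sym2_zero A a b ha hb, if_neg, Nat.mul_zero]
        rintro ⟨x, hxA, hx⟩
        rcases Sym2.mem_iff.mp hx with rfl | rfl
        exacts [ha hxA, hb hxA]
  -- the set of core vertices has 6 elements
  set Scor : Finset V := univ.filter (fun v => ∃ w, core.Adj v w) with hSdef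
  have hSmem : ∀ x ∈ Scor, ∃ w, core.Adj x w := by
    intro x hx; rw [hSdef, Finset.mem_filter] at hx; exact hx.2
  have hScl : ∀ x ∈ Scor, ∀ y : V, core.Adj x y → y ∈ Scor := by
    intro x hx y hxy
    rw [hSdef, Finset.mem_filter]
    exact ⟨mem_univ y, ⟨x, hxy.symm⟩⟩
  have hScard : Scor.card = 6 := by
    rw [count_lemma Scor hSmem hScl]
    have hfull : U.filter (fun e => ∃ x ∈ Scor, x ∈ e) = U := by
      apply Finset.filter_true_of_mem
      intro e he
      have heE : e ∈ G.edgeSet ∧ f e = 0 := by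
        rw [hUdef, Finset.mem_filter, SimpleGraph.mem_edgeFinset] at he; exact he
      clear he
      revert heE
      induction e using Sym2.ind with
      | _ a b =>
        rintro ⟨hadj, h0⟩
        rw [SimpleGraph.mem_edgeSet] at hadj
        have hcadj : core.Adj a b := ⟨hadj, show f s(a,b) ≠ 1 by omega⟩
        refine ⟨a, ?_, Sym2.mem_mk_left a b⟩
        rw [hSdef, Finset.mem_filter]
        exact ⟨mem_univ a, ⟨b, hcadj⟩⟩
    rw [hfull, hUcard]
  -- closed nonempty sets of core vertices have at least 4 elements
  have big : ∀ C : Finset V, (∀ x ∈ C, ∃ w, core.Adj x w) →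
      (∀ x ∈ C, ∀ y : V, core.Adj x y → y ∈ C) → ∀ z ∈ C, 4 ≤ C.card := by
    intro C hCm hCcl z hz
    have hcc := count_lemma C hCm hCcl
    have h0' : C.card ≠ 0 := Finset.card_ne_zero_of_mem hz
    have h2 : C.card ≠ 2 := by
      intro h2
      obtain ⟨e0, he0⟩ := Finset.card_eq_one.mp (part3 z (hCm z hz)).1
      obtain ⟨e2, he2⟩ := Finset.card_eq_one.mp (part3 z (hCm z hz)).2
      have h0mem : e0 ∈ G.incidenceFinset z ∧ f e0 = 0 := by
        have : e0 ∈ (G.incidenceFinset z).filter (fun g => f g = 0) := by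
          rw [he0]; exact Finset.mem_singleton_self e0
        exact Finset.mem_filter.mp this
      have h2mem : e2 ∈ G.incidenceFinset z ∧ f e2 = 2 := by
        have : e2 ∈ (G.incidenceFinset z).filter (fun g => f g = 2) := by
          rw [he2]; exact Finset.mem_singleton_self e2
        exact Finset.mem_filter.mp this
      have hz0 : e0 ∈ G.edgeSet ∧ z ∈ e0 := by
        have := h0mem.1; rwa [SimpleGraph.mem_incidenceFinset] at this
      have hz2 : e2 ∈ G.edgeSet ∧ z ∈ e2 := by
        have := h2mem.1; rwa [SimpleGraph.mem_incidenceFinset] at this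
      obtain ⟨a, rfl⟩ := Sym2.mem_iff_exists.mp hz0.2
      obtain ⟨b, rfl⟩ := Sym2.mem_iff_exists.mp hz2.2
      have hadja : G.Adj z a := G.mem_edgeSet.mp hz0.1
      have hadjb : G.Adj z b := G.mem_edgeSet.mp hz2.1
      have haC : a ∈ C := hCcl z hz a ⟨hadja, show f s(z,a) ≠ 1 by have := h0mem.2; omega⟩
      have hbC : b ∈ C := hCcl z hz b ⟨hadjb, show f s(z,b) ≠ 1 by have := h2mem.2; omega⟩
      by_cases hab : a = b
      · subst hab
        have := h0mem.2
        have := h2mem.2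
        omega
      · have hsub3 : ({z, a, b} : Finset V) ⊆ C := by
          intro x hx
          simp only [Finset.mem_insert, Finset.mem_singleton] at hx
          rcases hx with rfl | rfl | rfl
          exacts [hz, haC, hbC]
        have hcard3 : ({z, a, b} : Finset V).card = 3 := by
          rw [Finset.card_insert_of_notMem, Finset.card_pair hab]
          simp only [Finset.mem_insert, Finset.mem_singleton]
          push_neg
          exact ⟨G.ne_of_adj hadja, G.ne_of_adj hadjb⟩
        have := Finset.card_le_card hsub3
        omega
    omega
  -- Part 4
  refine ⟨part1, part2, ?_, ?_⟩
  · intro v hv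
    rw [hconv v 0, hconv v 2]
    exact part3 v hv
  · intro u v hu hv
    by_contra hcon
    set C₁ := Scor.filter (fun x => core.Reachable u x) with hC1
    set C₂ := Scor.filter (fun x => core.Reachable v x) with hC2
    have hC1mem : ∀ x ∈ C₁, ∃ w, core.Adj x w :=
      fun x hx => hSmem x (Finset.mem_filter.mp hx).1
    have hC2mem : ∀ x ∈ C₂, ∃ w, core.Adj x w :=
      fun x hx => hSmem x (Finset.mem_filter.mp hx).1
    have hC1cl : ∀ x ∈ C₁, ∀ y : V, core.Adj x y → y ∈ C₁ := by
      intro x hx y hxy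
      rw [hC1, Finset.mem_filter] at hx ⊢
      exact ⟨hScl x hx.1 y hxy, hx.2.trans hxy.reachable⟩
    have hC2cl : ∀ x ∈ C₂, ∀ y : V, core.Adj x y → y ∈ C₂ := by
      intro x hx y hxy
      rw [hC2, Finset.mem_filter] at hx ⊢
      exact ⟨hScl x hx.1 y hxy, hx.2.trans hxy.reachable⟩
    have huC : u ∈ C₁ := by
      rw [hC1, Finset.mem_filter, hSdef, Finset.mem_filter]
      exact ⟨⟨mem_univ u, hu⟩, SimpleGraph.Reachable.refl u⟩
    have hvC : v ∈ C₂ := by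
      rw [hC2, Finset.mem_filter, hSdef, Finset.mem_filter]
      exact ⟨⟨mem_univ v, hv⟩, SimpleGraph.Reachable.refl v⟩
    have hb1 := big C₁ hC1mem hC1cl u huC
    have hb2 := big C₂ hC2mem hC2cl v hvC
    have hdisj : Disjoint C₁ C₂ := by
      rw [Finset.disjoint_left]
      intro x hx1 hx2
      rw [hC1, Finset.mem_filter] at hx1
      rw [hC2, Finset.mem_filter] at hx2
      exact hcon (hx1.2.trans hx2.2.symm)
    have hsub : C₁ ∪ C₂ ⊆ Scor := by
      intro x hx
      rcases Finset.mem_union.mp hx with hx | hx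
      · exact (Finset.mem_filter.mp hx).1
      · exact (Finset.mem_filter.mp hx).1
    have hle := Finset.card_le_card hsub
    rw [Finset.card_union_of_disjoint hdisj] at hle
    omega
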